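/- For every n, the map sending an n-cycle (c_1,...,c_{n−1},n) in S_n to the word c_{n−1}c_{n−2}...c_1 (a permutation of [n−1]) is a bijection from the set of n-cycles of S_n with j excedances onto the set of permutations of S_{n−1} with j−1 descents. In particular, the number of n-cycles with j excedances equals the Eulerian number a_{n−1,j−1}. -/

import Mathlib

open scoped Classical
open scoped Fin.NatCast Fin.CommRing

/-- Descent set of `σ ∈ S_n` (0-based positions). -/
noncomputable def DesSet (n : ℕ) (σ : Equiv.Perm (Fin n)) : Finset ℕ :=
  (Finset.range n).filter fun i =>
    ∃ (h1 : i < n) (h2 : i + 1 < n), σ ⟨i + 1, h2⟩ < σ ⟨i, h1⟩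

/-- Descent number. -/
noncomputable def des (n : ℕ) (σ : Equiv.Perm (Fin n)) : ℕ := (DesSet n σ).card

/-- Excedance number. -/
noncomputable def exc (n : ℕ) (σ : Equiv.Perm (Fin n)) : ℕ :=
  ((Finset.range n).filter fun i => ∃ h : i < n, i < (σ ⟨i, h⟩ : ℕ)).card

namespace CycleWordAux

open Equiv Equiv.Perm Finset

variable {n : ℕ}

lemma pow_fix {σ : Equiv.Perm (Fin (n + 1))} (h1 : σ.IsCycle)
    (h2 : σ.support = Finset.univ) (m : ℕ) :
    (σ ^ m) (Fin.last n) = Fin.last n ↔ (n + 1) ∣ m := by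
  have hco : σ.IsCycleOn (Finset.univ : Finset (Fin (n + 1))) := by
    have h := h1.isCycleOn
    have : {x | σ x ≠ x} = ((Finset.univ : Finset (Fin (n + 1))) : Set (Fin (n + 1))) := by
      ext x
      simp [← Equiv.Perm.mem_support, h2]
    rwa [this] at h
  have := hco.pow_apply_eq (Finset.mem_univ (Fin.last n)) (n := m)
  simpa using this

/-- injectivity of `k ↦ σ^k (last)` on `[0,n]`. -/
lemma c_inj {σ : Equiv.Perm (Fin (n + 1))} (h1 : σ.IsCycle)
    (h2 : σ.support = Finset.univ) {a b : ℕ} (ha : a ≤ n) (hb : b ≤ n)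
    (h : (σ ^ a) (Fin.last n) = (σ ^ b) (Fin.last n)) : a = b := by
  wlog hab : a ≤ b generalizing a b
  · exact (this hb ha h.symm (by omega)).symm
  have : (σ ^ a) ((σ ^ (b - a)) (Fin.last n)) = (σ ^ a) (Fin.last n) := by
    rw [← Equiv.Perm.mul_apply, ← pow_add]
    rw [show a + (b - a) = b by omega]
    exact h.symm
  have h3 : (σ ^ (b - a)) (Fin.last n) = Fin.last n := (σ ^ a).injective this
  have h4 := (pow_fix h1 h2 (b - a)).mp h3
  have := Nat.eq_zero_of_dvd_of_lt h4 (by omega)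
  omega

lemma c_surj {σ : Equiv.Perm (Fin (n + 1))} (h1 : σ.IsCycle)
    (h2 : σ.support = Finset.univ) (x : Fin (n + 1)) :
    ∃ k ≤ n, (σ ^ k) (Fin.last n) = x := by
  have hinj : Function.Injective (fun k : Fin (n + 1) => (σ ^ (k : ℕ)) (Fin.last n)) := by
    intro a b hab
    exact Fin.ext (c_inj h1 h2 (Nat.lt_succ_iff.mp a.isLt) (Nat.lt_succ_iff.mp b.isLt) hab)
  have hsurj := (Finite.injective_iff_bijective.mp hinj).2
  obtain ⟨k, hk⟩ := hsurj x
  exact ⟨(k : ℕ), Nat.lt_succ_iff.mp k.isLt, hk⟩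

lemma c_ne_last {σ : Equiv.Perm (Fin (n + 1))} (h1 : σ.IsCycle)
    (h2 : σ.support = Finset.univ) {k : ℕ} (hk1 : 1 ≤ k) (hkn : k ≤ n) :
    (σ ^ k) (Fin.last n) ≠ Fin.last n := by
  intro h
  have h4 := (pow_fix h1 h2 k).mp h
  have := Nat.eq_zero_of_dvd_of_lt h4 (by omega)
  omega

lemma c_succ (σ : Equiv.Perm (Fin (n + 1))) (k : ℕ) :
    σ ((σ ^ k) (Fin.last n)) = (σ ^ (k + 1)) (Fin.last n) := by
  rw [pow_succ', Equiv.Perm.mul_apply]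

/-- The key counting lemma: if `τ` encodes the word of `σ`, then `exc σ = des τ + 1`. -/
lemma exc_eq_des_add_one (hn : 1 ≤ n) {σ : Equiv.Perm (Fin (n + 1))}
    (h1 : σ.IsCycle) (h2 : σ.support = Finset.univ) {τ : Equiv.Perm (Fin n)}
    (hτ : ∀ p : Fin n, Fin.castSucc (τ p) = (σ ^ (n - p.val)) (Fin.last n)) :
    exc (n + 1) σ = des n τ + 1 := by
  set c : ℕ → Fin (n + 1) := fun k => (σ ^ k) (Fin.last n) with hc
  have hc0 : c 0 = Fin.last n := by simp [hc]
  have hcn1 : c (n + 1) = Fin.last n := (pow_fix h1 h2 (n + 1)).mpr dvd_rfl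
  have hne : ∀ k, 1 ≤ k → k ≤ n → c k ≠ Fin.last n := fun k hk1 hk2 => c_ne_last h1 h2 hk1 hk2
  have hcsucc : ∀ k, σ (c k) = c (k + 1) := fun k => c_succ σ k
  -- Step 1: exc = card of Q-filter on range (n+1)
  have step1 : exc (n + 1) σ = ((Finset.range (n + 1)).filter fun k => c k < c (k + 1)).card := by
    unfold exc
    symm
    apply Finset.card_bij (fun k _ => ((c k : ℕ)))
    · intro k hk
      simp only [Finset.mem_filter, Finset.mem_range] at hk ⊢
      refine ⟨(c k).isLt, (c k).isLt, ?_⟩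
      have : σ ⟨(c k : ℕ), (c k).isLt⟩ = c (k + 1) := by
        rw [Fin.eta]; exact hcsucc k
      rw [this]
      exact hk.2
    · intro a ha b hb hab
      simp only [Finset.mem_filter, Finset.mem_range] at ha hb
      exact c_inj h1 h2 (Nat.lt_succ_iff.mp ha.1) (Nat.lt_succ_iff.mp hb.1)
        (Fin.ext hab)
    · intro i hi
      simp only [Finset.mem_filter, Finset.mem_range] at hi
      obtain ⟨hi1, hi2, hi3⟩ := hi
      obtain ⟨k, hk, hck⟩ := c_surj h1 h2 ⟨i, hi2⟩
      refine ⟨k, ?_, ?_⟩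
      · simp only [Finset.mem_filter, Finset.mem_range]
        refine ⟨by omega, ?_⟩
        rw [← hcsucc k]
        show c k < σ (c k)
        rw [show c k = (⟨i, hi2⟩ : Fin (n + 1)) from hck]
        exact hi3
      · rw [show c k = (⟨i, hi2⟩ : Fin (n + 1)) from hck]
  -- Step 2: split off k = 0 and k = n
  have hQ0 : ¬ (c 0 < c 1) := by rw [hc0]; exact fun h => absurd h (not_lt.mpr (Fin.le_last _))
  have hQn : c n < c (n + 1) := by
    rw [hcn1]
    exact Fin.lt_last_iff_ne_last.mpr (hne n hn le_rfl)
  have step2 : ((Finset.range (n + 1)).filter fun k => c k < c (k + 1)).card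
      = ((Finset.Ico 1 n).filter fun k => c k < c (k + 1)).card + 1 := by
    rw [Finset.range_add_one, Finset.filter_insert, if_pos hQn,
      Finset.card_insert_of_notMem (by simp)]
    congr 1
    congr 1
    ext k
    simp only [Finset.mem_filter, Finset.mem_range, Finset.mem_Ico]
    constructor
    · rintro ⟨hk, hq⟩
      refine ⟨⟨?_, hk⟩, hq⟩
      rcases Nat.eq_zero_or_pos k with rfl | h
      · exact absurd hq hQ0
      · exact h
    · rintro ⟨⟨_, hk⟩, hq⟩; exact ⟨hk, hq⟩
  -- Step 3: des = card of Q-filter on Ico 1 n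
  have hτ' : ∀ (p : ℕ) (hp : p < n), Fin.castSucc (τ ⟨p, hp⟩) = c (n - p) := by
    intro p hp; exact hτ ⟨p, hp⟩
  have step3 : des n τ = ((Finset.Ico 1 n).filter fun k => c k < c (k + 1)).card := by
    unfold des DesSet
    apply Finset.card_bij (fun p _ => n - (p + 1))
    · intro p hp
      simp only [Finset.mem_filter, Finset.mem_range] at hp
      obtain ⟨hp1, h1', h2', hlt⟩ := hp
      simp only [Finset.mem_filter, Finset.mem_Ico]
      refine ⟨⟨by omega, by omega⟩, ?_⟩
      have e1 := hτ' (p + 1) h2'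
      have e2 := hτ' p h1'
      have : Fin.castSucc (τ ⟨p + 1, h2'⟩) < Fin.castSucc (τ ⟨p, h1'⟩) :=
        Fin.castSucc_lt_castSucc_iff.mpr hlt
      rw [e1, e2] at this
      rw [show n - (p + 1) + 1 = n - p by omega]
      exact this
    · intro a ha b hb hab
      simp only [Finset.mem_filter, Finset.mem_range] at ha hb
      obtain ⟨_, _, ha2, _⟩ := ha
      obtain ⟨_, _, hb2, _⟩ := hb
      omega
    · intro k hk
      simp only [Finset.mem_filter, Finset.mem_Ico] at hk
      obtain ⟨⟨hk1, hk2⟩, hq⟩ := hk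
      refine ⟨n - (k + 1), ?_, by omega⟩
      simp only [Finset.mem_filter, Finset.mem_range]
      have hp1 : n - (k + 1) < n := by omega
      have hp2 : n - (k + 1) + 1 < n := by omega
      refine ⟨by omega, hp1, hp2, ?_⟩
      rw [← Fin.castSucc_lt_castSucc_iff, hτ' _ hp2, hτ' _ hp1]
      rw [show n - (n - (k + 1) + 1) = k by omega, show n - (n - (k + 1)) = k + 1 by omega]
      exact hq
  rw [step1, step2, step3]

end CycleWordAux

/-- (With `S_{n+1}` playing the role of `S_n` of the paper.)
Writing an `(n+1)`-cycle `σ` as `(c_1,…,c_n, n+1)` (so `c_i = σ^i(n+1)`), the map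
`σ ↦ c_n c_{n−1} ⋯ c_1` (the word whose 0-based `p`-th letter is `σ^{n−p}(n+1)`)
is a bijection from the set of `(n+1)`-cycles with `j` excedances onto the set of
words of permutations `τ ∈ S_n` with `j−1` descents; in particular the number of
`(n+1)`-cycles with `j` excedances is the Eulerian number `a_{n,j−1}`. -/
theorem cycle_word_bijection (n j : ℕ) (hn : 1 ≤ n) (hj : 1 ≤ j) :
    Set.BijOn
      (fun σ : Equiv.Perm (Fin (n + 1)) => fun p : Fin n => (σ ^ (n - p.val)) (Fin.last n))
      {σ : Equiv.Perm (Fin (n + 1)) |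
        σ.IsCycle ∧ σ.support = Finset.univ ∧ exc (n + 1) σ = j}
      {w : Fin n → Fin (n + 1) |
        ∃ τ : Equiv.Perm (Fin n), des n τ = j - 1 ∧ w = fun p => Fin.castSucc (τ p)}
    ∧ Set.ncard {σ : Equiv.Perm (Fin (n + 1)) |
          σ.IsCycle ∧ σ.support = Finset.univ ∧ exc (n + 1) σ = j} =
        Set.ncard {τ : Equiv.Perm (Fin n) | des n τ = j - 1} := by
  classical
  set F := fun σ : Equiv.Perm (Fin (n + 1)) => fun p : Fin n => (σ ^ (n - p.val)) (Fin.last n)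
    with hF
  set A := {σ : Equiv.Perm (Fin (n + 1)) |
    σ.IsCycle ∧ σ.support = Finset.univ ∧ exc (n + 1) σ = j} with hA
  set B := {w : Fin n → Fin (n + 1) |
    ∃ τ : Equiv.Perm (Fin n), des n τ = j - 1 ∧ w = fun p => Fin.castSucc (τ p)} with hB
  -- MapsTo
  have hmaps : Set.MapsTo F A B := by
    rintro σ ⟨h1, h2, h3⟩
    have hne : ∀ p : Fin n, (σ ^ (n - p.val)) (Fin.last n) ≠ Fin.last n := fun p =>
      CycleWordAux.c_ne_last h1 h2 (by omega) (by omega)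
    set t : Fin n → Fin n := fun p => ((σ ^ (n - p.val)) (Fin.last n)).castPred (hne p) with ht
    have htc : ∀ p, Fin.castSucc (t p) = (σ ^ (n - p.val)) (Fin.last n) := fun p =>
      Fin.castSucc_castPred _ _
    have htinj : Function.Injective t := by
      intro a b hab
      have : (σ ^ (n - a.val)) (Fin.last n) = (σ ^ (n - b.val)) (Fin.last n) := by
        rw [← htc a, ← htc b, hab]
      have := CycleWordAux.c_inj h1 h2 (Nat.sub_le _ _) (Nat.sub_le _ _) this
      have ha := a.isLt; have hb := b.isLt
      exact Fin.ext (by omega)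
    set τ : Equiv.Perm (Fin n) := Equiv.ofBijective t (Finite.injective_iff_bijective.mp htinj)
      with hτdef
    have hτc : ∀ p, Fin.castSucc (τ p) = (σ ^ (n - p.val)) (Fin.last n) := htc
    have hexc := CycleWordAux.exc_eq_des_add_one hn h1 h2 hτc
    refine ⟨τ, by omega, ?_⟩
    funext p
    exact (hτc p).symm
  -- InjOn
  have hinj : Set.InjOn F A := by
    rintro σ ⟨h1, h2, _⟩ σ' ⟨h1', h2', _⟩ heq
    have hck : ∀ k ≤ n, (σ ^ k) (Fin.last n) = (σ' ^ k) (Fin.last n) := by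
      intro k hk
      rcases Nat.eq_zero_or_pos k with rfl | hk1
      · simp
      · have hp : n - k < n := by omega
        have := congrFun heq ⟨n - k, hp⟩
        simpa [hF, show n - (n - k) = k by omega] using this
    apply Equiv.ext (fun x => ?_)
    obtain ⟨k, hk, hckx⟩ := CycleWordAux.c_surj h1 h2 x
    have hx' : (σ' ^ k) (Fin.last n) = x := by rw [← hck k hk]; exact hckx
    have hk1 : (σ ^ (k + 1)) (Fin.last n) = (σ' ^ (k + 1)) (Fin.last n) := by
      rcases Nat.lt_or_ge k n with h | h
      · exact hck (k + 1) (by omega)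
      · have hkn : k = n := by omega
        rw [hkn]
        rw [(CycleWordAux.pow_fix h1 h2 (n + 1)).mpr dvd_rfl,
          (CycleWordAux.pow_fix h1' h2' (n + 1)).mpr dvd_rfl]
    calc σ x = σ ((σ ^ k) (Fin.last n)) := by rw [hckx]
      _ = (σ ^ (k + 1)) (Fin.last n) := CycleWordAux.c_succ σ k
      _ = (σ' ^ (k + 1)) (Fin.last n) := hk1
      _ = σ' ((σ' ^ k) (Fin.last n)) := (CycleWordAux.c_succ σ' k).symm
      _ = σ' x := by rw [hx']
  -- SurjOn
  have hsurj : Set.SurjOn F A B := by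
    rintro w ⟨τ, hdes, rfl⟩
    -- construct σ as a conjugate of finRotate
    have hd_ne : ∀ k : Fin (n + 1), (k : ℕ) ≠ 0 → n - (k : ℕ) < n := by
      intro k hk
      have := k.isLt
      omega
    set d : Fin (n + 1) → Fin (n + 1) := fun k =>
      if h : (k : ℕ) = 0 then Fin.last n
      else Fin.castSucc (τ ⟨n - (k : ℕ), hd_ne k h⟩) with hd
    have hdinj : Function.Injective d := by
      intro a b hab
      simp only [hd] at hab
      by_cases ha : (a : ℕ) = 0 <;> by_cases hb : (b : ℕ) = 0
      · exact Fin.ext (by omega)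
      · rw [dif_pos ha, dif_neg hb] at hab
        exact absurd hab.symm (Fin.castSucc_lt_last _).ne
      · rw [dif_neg ha, dif_pos hb] at hab
        exact absurd hab (Fin.castSucc_lt_last _).ne
      · rw [dif_neg ha, dif_neg hb] at hab
        have := τ.injective (Fin.castSucc_injective _ hab)
        have h2 := Fin.mk.inj_iff.mp this
        have ha' := a.isLt; have hb' := b.isLt
        exact Fin.ext (by omega)
    set e : Equiv.Perm (Fin (n + 1)) :=
      Equiv.ofBijective d (Finite.injective_iff_bijective.mp hdinj) with he
    have heapp : ∀ k, e k = d k := fun k => rfl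
    set σ : Equiv.Perm (Fin (n + 1)) := e * finRotate (n + 1) * e⁻¹ with hσ
    have hrot_cycle : (finRotate (n + 1)).IsCycle := isCycle_finRotate_of_le (by omega)
    have hrot_supp : (finRotate (n + 1)).support = Finset.univ :=
      support_finRotate_of_le (by omega)
    have h1 : σ.IsCycle := hrot_cycle.conj
    have h2 : σ.support = Finset.univ := by
      rw [hσ, Equiv.Perm.support_conj, hrot_supp]
      ext x
      simp only [Finset.mem_map, Finset.mem_univ, iff_true]
      exact ⟨e⁻¹ x, by simp⟩
    -- σ^m (e k) = e (finRotate^m k)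
    have hpow : ∀ (m : ℕ) (k : Fin (n + 1)), (σ ^ m) (e k) = e ((finRotate (n + 1) ^ m) k) := by
      intro m k
      rw [hσ, conj_pow]
      simp [Equiv.Perm.mul_apply]
    have hrotpow : ∀ m : ℕ, ((finRotate (n + 1)) ^ m) 0 = (m : Fin (n + 1)) := by
      intro m
      induction m with
      | zero => simp
      | succ m ih =>
        rw [pow_succ', Equiv.Perm.mul_apply, ih, finRotate_succ_apply]
        push_cast
        ring
    have he0 : e 0 = Fin.last n := by
      rw [heapp]
      simp [hd]
    have hFσ : F σ = fun p => Fin.castSucc (τ p) := by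
      funext p
      have hplt : n - p.val < n + 1 := by omega
      have : (σ ^ (n - p.val)) (Fin.last n) = e ((n - p.val : ℕ) : Fin (n + 1)) := by
        rw [← he0, hpow, hrotpow]
      rw [hF]
      simp only
      rw [this, heapp]
      have hval : (((n - p.val : ℕ) : Fin (n + 1)) : ℕ) = n - p.val :=
        Fin.val_cast_of_lt hplt
      have hne0 : (((n - p.val : ℕ) : Fin (n + 1)) : ℕ) ≠ 0 := by
        rw [hval]; have := p.isLt; omega
      rw [hd]
      simp only
      rw [dif_neg hne0]
      congr 1
      refine congrArg (⇑τ) (Fin.ext ?_)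
      simp only [hval]
      have := p.isLt
      omega
    have hτc : ∀ p : Fin n, Fin.castSucc (τ p) = (σ ^ (n - p.val)) (Fin.last n) := by
      intro p
      exact (congrFun hFσ p).symm
    have hexc := CycleWordAux.exc_eq_des_add_one hn h1 h2 hτc
    refine ⟨σ, ⟨h1, h2, by omega⟩, hFσ⟩
  have hbij : Set.BijOn F A B := ⟨hmaps, hinj, hsurj⟩
  refine ⟨hbij, ?_⟩
  -- cardinality
  have hAB : A.ncard = B.ncard := by
    rw [← hbij.image_eq, Set.ncard_image_of_injOn hinj]
  set g : Equiv.Perm (Fin n) → (Fin n → Fin (n + 1)) :=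
    fun τ => fun p => Fin.castSucc (τ p) with hg
  have hgB : B = g '' {τ : Equiv.Perm (Fin n) | des n τ = j - 1} := by
    ext w
    simp only [hB, Set.mem_setOf_eq, Set.mem_image]
    constructor
    · rintro ⟨τ, h1, h2⟩; exact ⟨τ, h1, h2.symm⟩
    · rintro ⟨τ, h1, h2⟩; exact ⟨τ, h1, h2.symm⟩
  have hginj : Function.Injective g := by
    intro τ τ' h
    apply Equiv.ext (fun p => ?_)
    exact Fin.castSucc_injective _ (congrFun h p)
  rw [hAB, hgB, Set.ncard_image_of_injective _ hginj]
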